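/- For every n ≥ 1 the independence polynomial I(W_n;x) of the centipede W_n is unimodal, and for n ≥ 2 it satisfies the recurrence I(W_n;x) = (1+x)·(I(W_{n−1};x) + x·I(W_{n−2};x)), where I(W_0;x) = 1 and I(W_1;x) = 1 + 2x. -/

import Mathlib

open Polynomial
open scoped Classical

/-- The independence polynomial of a finite simple graph: the coefficient of `x^k`
is the number of independent (stable) sets of cardinality `k`. -/
noncomputable def indepPoly {V : Type*} [Fintype V] (G : SimpleGraph V) : Polynomial ℤ :=
  ∑ s ∈ Finset.univ.powerset.filter
      (fun s : Finset V => ∀ u ∈ s, ∀ v ∈ s, ¬ G.Adj u v),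
    Polynomial.X ^ s.card

/-- A polynomial is unimodal if its coefficient sequence increases up to some
index `k` and decreases afterwards. -/
def Unimodal (p : Polynomial ℤ) : Prop :=
  ∃ k : ℕ, (∀ i j : ℕ, i ≤ j → j ≤ k → p.coeff i ≤ p.coeff j) ∧
    (∀ i j : ℕ, k ≤ i → i ≤ j → p.coeff j ≤ p.coeff i)

/-- A finset of vertices is independent (stable) if no two of its members are adjacent. -/
def IndepFinset {V : Type*} (G : SimpleGraph V) (s : Finset V) : Prop :=
  ∀ u ∈ s, ∀ v ∈ s, ¬ G.Adj u v

/-- A maximal independent set. -/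
def MaximalIndepFinset {V : Type*} (G : SimpleGraph V) (s : Finset V) : Prop :=
  IndepFinset G s ∧ ∀ u, u ∉ s → ¬ IndepFinset G (insert u s)

/-- A graph is well-covered if all its maximal independent sets have the same cardinality. -/
def WellCovered {V : Type*} [Fintype V] (G : SimpleGraph V) : Prop :=
  ∀ s t : Finset V, MaximalIndepFinset G s → MaximalIndepFinset G t → s.card = t.card

/-- The stability number `α(G)`: maximum size of an independent set. -/
noncomputable def alpha {V : Type*} [Fintype V] (G : SimpleGraph V) : ℕ :=
  (Finset.univ.powerset.filter (fun s : Finset V => IndepFinset G s)).sup Finset.card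

/-- A vertex is simplicial if its neighborhood induces a complete subgraph. -/
def Simplicial {V : Type*} (G : SimpleGraph V) (v : V) : Prop :=
  ∀ u w, G.Adj v u → G.Adj v w → u ≠ w → G.Adj u w

/-- A graph is claw-free if it has no induced subgraph isomorphic to `K_{1,3}`. -/
def ClawFree {V : Type*} (G : SimpleGraph V) : Prop :=
  ∀ c x y z : V, G.Adj c x → G.Adj c y → G.Adj c z →
    x ≠ y → x ≠ z → y ≠ z → ¬ G.Adj x y → ¬ G.Adj x z → ¬ G.Adj y z → False

/-- Disjoint union of two simple graphs. -/
def disjUnion {V W : Type*} (G : SimpleGraph V) (H : SimpleGraph W) : SimpleGraph (V ⊕ W) :=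
  SimpleGraph.fromRel (fun x y =>
    (∃ a b, x = Sum.inl a ∧ y = Sum.inl b ∧ G.Adj a b) ∨
    (∃ a b, x = Sum.inr a ∧ y = Sum.inr b ∧ H.Adj a b))

/-- The edge-join `(G;v) ⊖ (H;w)`: disjoint union of `G` and `H` plus the edge `vw`. -/
def edgeJoin {V W : Type*} (G : SimpleGraph V) (v : V) (H : SimpleGraph W) (w : W) :
    SimpleGraph (V ⊕ W) :=
  SimpleGraph.fromRel (fun x y =>
    (∃ a b, x = Sum.inl a ∧ y = Sum.inl b ∧ G.Adj a b) ∨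
    (∃ a b, x = Sum.inr a ∧ y = Sum.inr b ∧ H.Adj a b) ∨
    (x = Sum.inl v ∧ y = Sum.inr w))

/-- The triangle chain `△_n = K_3 ⊖ (n-1)K_3` on vertices `v_1, ..., v_{3n}`
(0-indexed here: vertex `k` is `v_{k+1}`): triangles `{3i, 3i+1, 3i+2}` together with
bridge edges joining vertex `3i+1` to vertex `3i+3`. -/
def triChain (n : ℕ) : SimpleGraph (Fin (3 * n)) :=
  SimpleGraph.fromRel (fun x y =>
    ((x : ℕ) / 3 = (y : ℕ) / 3) ∨ (∃ i, (x : ℕ) = 3 * i + 1 ∧ (y : ℕ) = 3 * i + 3))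

/-- The centipede `W_n`: vertices `a_i = Sum.inl i` and `b_i = Sum.inr i`, with
edges `a_i b_i` and `b_i b_{i+1}`. -/
def centipede (n : ℕ) : SimpleGraph (Fin n ⊕ Fin n) :=
  SimpleGraph.fromRel (fun x y =>
    (∃ i, x = Sum.inl i ∧ y = Sum.inr i) ∨
    (∃ i j : Fin n, x = Sum.inr i ∧ y = Sum.inr j ∧ (i : ℕ) + 1 = (j : ℕ)))

/-- The well-covered spider `S_n`: vertices `a_i = Sum.inl i`, `b_i = Sum.inr i`
(`0 ≤ i ≤ n`), with edges `a_i b_i` for all `i` and `b_0 b_i` for `i ≠ 0`. -/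
def spider (n : ℕ) : SimpleGraph (Fin (n + 1) ⊕ Fin (n + 1)) :=
  SimpleGraph.fromRel (fun x y =>
    (∃ i, x = Sum.inl i ∧ y = Sum.inr i) ∨
    (∃ i, x = Sum.inr 0 ∧ y = Sum.inr i ∧ i ≠ 0))

/-- The path `P_4` on vertices `a = 0`, `b = 1`, `c = 2`, `d = 3`. -/
def P4 : SimpleGraph (Fin 4) :=
  SimpleGraph.fromRel (fun x y =>
    (x = 0 ∧ y = 1) ∨ (x = 1 ∧ y = 2) ∨ (x = 2 ∧ y = 3))

/-- `G_{2,4} = (W_2; b_2) ⊖ (W_4; v_2)`. -/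
def G24 : SimpleGraph ((Fin 2 ⊕ Fin 2) ⊕ (Fin 4 ⊕ Fin 4)) :=
  edgeJoin (centipede 2) (Sum.inr 1) (centipede 4) (Sum.inr 1)

namespace Stmt13Aux

/-- coefficient sequences of the centipede independence polynomials, ℤ-indexed -/
def w : ℕ → ℤ → ℤ
  | 0 => fun k => if k = 0 then 1 else 0
  | 1 => fun k => if k = 0 then 1 else if k = 1 then 2 else 0
  | (n+2) => fun k => w (n+1) k + w (n+1) (k-1) + w n (k-1) + w n (k-2)

lemma w_zero (k : ℤ) : w 0 k = if k = 0 then 1 else 0 := rfl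
lemma w_one (k : ℤ) : w 1 k = if k = 0 then 1 else if k = 1 then 2 else 0 := rfl
lemma w_rec (n : ℕ) (k : ℤ) :
    w (n+2) k = w (n+1) k + w (n+1) (k-1) + w n (k-1) + w n (k-2) := rfl

lemma w_two (k : ℤ) : w 2 k = if k = 0 then 1 else if k = 1 then 4 else if k = 2 then 3 else 0 := by
  show w 1 k + w 1 (k-1) + w 0 (k-1) + w 0 (k-2) = _
  simp only [w_one, w_zero]
  split_ifs <;> omega

lemma w_neg : ∀ (n : ℕ) (k : ℤ), k < 0 → w n k = 0
  | 0, k, hk => by simp [w_zero]; omega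
  | 1, k, hk => by simp [w_one]; omega
  | (n+2), k, hk => by
    rw [w_rec, w_neg (n+1) k hk, w_neg (n+1) (k-1) (by omega),
      w_neg n (k-1) (by omega), w_neg n (k-2) (by omega)]
    ring

lemma w_gt : ∀ (n : ℕ) (k : ℤ), (n : ℤ) < k → w n k = 0
  | 0, k, hk => by simp [w_zero]; omega
  | 1, k, hk => by simp [w_one]; omega
  | (n+2), k, hk => by
    push_cast at hk
    rw [w_rec, w_gt (n+1) k (by push_cast; omega),
      w_gt (n+1) (k-1) (by push_cast; omega),
      w_gt n (k-1) (by push_cast; omega),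
      w_gt n (k-2) (by push_cast; omega)]
    ring

lemma w_nonneg : ∀ (n : ℕ) (k : ℤ), 0 ≤ w n k
  | 0, k => by rw [w_zero]; split <;> norm_num
  | 1, k => by rw [w_one]; split_ifs <;> norm_num
  | (n+2), k => by
    rw [w_rec]
    have h1 := w_nonneg (n+1) k
    have h2 := w_nonneg (n+1) (k-1)
    have h3 := w_nonneg n (k-1)
    have h4 := w_nonneg n (k-2)
    linarith

lemma w_pos : ∀ (n : ℕ) (k : ℤ), 0 ≤ k → k ≤ (n : ℤ) → 0 < w n k
  | 0, k, h0, h1 => by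
    have : k = 0 := le_antisymm (by exact_mod_cast h1) h0
    simp [w_zero, this]
  | 1, k, h0, h1 => by
    have : k = 0 ∨ k = 1 := by push_cast at h1; omega
    rcases this with h | h <;> simp [w_one, h]
  | (n+2), k, h0, h1 => by
    push_cast at h1
    rw [w_rec]
    have h2 := w_nonneg (n+1) (k-1)
    have h3 := w_nonneg n (k-1)
    have h4 := w_nonneg n (k-2)
    by_cases hk : k ≤ (n : ℤ) + 1
    · have := w_pos (n+1) k h0 (by push_cast; omega)
      linarith
    · have := w_pos (n+1) (k-1) (by omega) (by push_cast; omega)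
      have h5 := w_nonneg (n+1) k
      linarith

/-- support/positivity bundle -/
def SuppP (u : ℤ → ℤ) (d : ℤ) : Prop :=
  (∀ k, k < 0 → u k = 0) ∧ (∀ k, d < k → u k = 0) ∧ (∀ k, 0 ≤ k → k ≤ d → 0 < u k)

lemma SuppP.nonneg {u : ℤ → ℤ} {d : ℤ} (h : SuppP u d) (k : ℤ) : 0 ≤ u k := by
  rcases lt_trichotomy k 0 with hk | hk | hk
  · rw [h.1 k hk]
  · subst hk
    rcases le_or_gt 0 d with hd | hd
    · exact le_of_lt (h.2.2 0 le_rfl hd)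
    · rw [h.2.1 0 hd]
  · rcases le_or_gt k d with hd | hd
    · exact le_of_lt (h.2.2 k (le_of_lt hk) hd)
    · rw [h.2.1 k hd]

lemma suppP_w (n : ℕ) : SuppP (w n) n :=
  ⟨fun k hk => w_neg n k hk, fun k hk => w_gt n k hk, fun k h0 h1 => w_pos n k h0 h1⟩

def DomP (u v : ℤ → ℤ) : Prop := ∀ k : ℤ, u k * v (k+1) ≤ u (k+1) * v k
def BetP (u v : ℤ → ℤ) : Prop := ∀ k : ℤ, v k * u (k+2) ≤ v (k+1) * u (k+1)
def LCP (u : ℤ → ℤ) : Prop := ∀ k : ℤ, u k * u (k+2) ≤ u (k+1) * u (k+1)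

lemma cancel_mul {a b c : ℤ} (hc : 0 < c) (h : a * c ≤ b * c) : a ≤ b :=
  le_of_mul_le_mul_right h hc

lemma cancel_helper {P Q R P1 Q1 P2 Q2 : ℤ} (hR : 0 < R) (h1 : P1 ≤ Q1) (h2 : P2 ≤ Q2)
    (hP2 : 0 ≤ P2) (hQ1 : 0 ≤ Q1) (eP : P1 * P2 = P * R) (eQ : Q1 * Q2 = Q * R) : P ≤ Q := by
  apply cancel_mul hR
  rw [← eP, ← eQ]
  exact mul_le_mul h1 h2 hP2 hQ1

/-- offset-2 log-concavity -/
lemma lc2 {u : ℤ → ℤ} {d : ℤ} (hu : SuppP u d) (hlc : LCP u) :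
    ∀ k : ℤ, u k * u (k+3) ≤ u (k+1) * u (k+2) := by
  intro k
  rcases lt_or_ge k 0 with hk | hk
  · rw [hu.1 k hk]
    simpa using mul_nonneg (hu.nonneg (k+1)) (hu.nonneg (k+2))
  rcases lt_or_ge d (k+3) with hd | hd
  · rw [hu.2.1 (k+3) hd]
    simpa using mul_nonneg (hu.nonneg (k+1)) (hu.nonneg (k+2))
  have p1 : 0 < u (k+1) := hu.2.2 _ (by omega) (by omega)
  have p2 : 0 < u (k+2) := hu.2.2 _ (by omega) (by omega)
  exact cancel_helper (mul_pos p1 p2) (hlc k) (hlc (k+1))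
    (mul_nonneg (hu.nonneg _) (hu.nonneg _)) (mul_nonneg (hu.nonneg _) (hu.nonneg _))
    (by ring_nf) (by ring_nf)

/-- offset-2 dominance -/
lemma dom2 {u v : ℤ → ℤ} {d e : ℤ} (hu : SuppP u d) (hv : SuppP v e) (hde : e ≤ d + 1)
    (h : DomP u v) : ∀ k : ℤ, u k * v (k+2) ≤ u (k+2) * v k := by
  intro k
  rcases lt_or_ge k 0 with hk | hk
  · rw [hu.1 k hk]
    simpa using mul_nonneg (hu.nonneg (k+2)) (hv.nonneg k)
  rcases lt_or_ge e (k+2) with he | he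
  · rw [hv.2.1 (k+2) he]
    simpa using mul_nonneg (hu.nonneg (k+2)) (hv.nonneg k)
  have p1 : 0 < u (k+1) := hu.2.2 _ (by omega) (by omega)
  have p2 : 0 < v (k+1) := hv.2.2 _ (by omega) (by omega)
  exact cancel_helper (mul_pos p1 p2) (h k) (h (k+1))
    (mul_nonneg (hu.nonneg _) (hv.nonneg _)) (mul_nonneg (hu.nonneg _) (hv.nonneg _))
    (by ring_nf) (by ring_nf)

/-- offset bet chain -/
lemma bet2 {u v : ℤ → ℤ} {d e : ℤ} (hu : SuppP u d) (hv : SuppP v e)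
    (hbet : BetP u v) (hlcu : LCP u) : ∀ k : ℤ, v k * u (k+3) ≤ v (k+1) * u (k+2) := by
  intro k
  rcases lt_or_ge k 0 with hk | hk
  · rw [hv.1 k hk]
    simpa using mul_nonneg (hv.nonneg (k+1)) (hu.nonneg (k+2))
  rcases lt_or_ge d (k+3) with hd | hd
  · rw [hu.2.1 (k+3) hd]
    simpa using mul_nonneg (hv.nonneg (k+1)) (hu.nonneg (k+2))
  have p1 : 0 < u (k+1) := hu.2.2 _ (by omega) (by omega)
  have p2 : 0 < u (k+2) := hu.2.2 _ (by omega) (by omega)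
  exact cancel_helper (mul_pos p1 p2) (hbet k) (hlcu (k+1))
    (mul_nonneg (hu.nonneg _) (hu.nonneg _)) (mul_nonneg (hv.nonneg _) (hu.nonneg _))
    (by ring_nf) (by ring_nf)

/-- the inductive invariant : interlacing data for the pair (w (m+1), w m) -/
def Inv2 (m : ℕ) : Prop :=
  DomP (w (m+1)) (w m) ∧ BetP (w (m+1)) (w m) ∧ LCP (w (m+1)) ∧ LCP (w m)

lemma inv2_zero : Inv2 0 := by
  refine ⟨?_, ?_, ?_, ?_⟩ <;> intro k <;>
    simp only [Nat.reduceAdd, w_one, w_zero] <;> split_ifs <;> omega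

lemma inv2_one : Inv2 1 := by
  refine ⟨?_, ?_, ?_, ?_⟩ <;> intro k <;>
    simp only [Nat.reduceAdd, w_two, w_one] <;> split_ifs <;> omega

section Step

variable {m : ℕ}

-- a = w (m+2), b = w (m+1), c = w m
-- g k = a k + b (k-1), G k = b k + c (k-1)

lemma suppP_g (m : ℕ) : SuppP (fun k => w (m+1) k + w m (k-1)) ((m:ℤ)+1) := by
  refine ⟨fun k hk => ?_, fun k hk => ?_, fun k h0 h1 => ?_⟩
  · show w (m+1) k + w m (k-1) = 0
    rw [w_neg (m+1) k hk, w_neg m (k-1) (by omega)]; ring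
  · show w (m+1) k + w m (k-1) = 0
    rw [w_gt (m+1) k (by push_cast; omega), w_gt m (k-1) (by push_cast; omega)]; ring
  · show 0 < w (m+1) k + w m (k-1)
    have h2 := w_pos (m+1) k h0 (by push_cast; omega)
    have h3 := w_nonneg m (k-1)
    linarith

lemma w_succ_eq_g (m : ℕ) (k : ℤ) :
    w (m+2) k = (w (m+1) k + w m (k-1)) + (w (m+1) (k-1) + w m ((k-1)-1)) := by
  rw [w_rec]; ring_nf

lemma lc_g (h1 : Inv2 (m+1)) : LCP (fun k => w (m+2) k + w (m+1) (k-1)) := by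
  obtain ⟨hdom, hbet, hlca, hlcb⟩ := h1
  intro k
  show (w (m+2) k + w (m+1) (k-1)) * (w (m+2) (k+2) + w (m+1) (k+2-1))
      ≤ (w (m+2) (k+1) + w (m+1) (k+1-1)) * (w (m+2) (k+1) + w (m+1) (k+1-1))
  have t1 := hlca k
  have t2 := hlcb (k-1)
  have t3 := hdom k
  have t4 := bet2 (suppP_w (m+2)) (suppP_w (m+1)) hbet hlca (k-1)
  simp only [Nat.add_eq, show m+1+1 = m+2 from rfl] at t1 t2 t3 t4 ⊢
  ring_nf at t1 t2 t3 t4 ⊢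
  nlinarith [t1, t2, t3, t4]

lemma dom_g_a (h1 : Inv2 (m+1)) : DomP (fun k => w (m+2) k + w (m+1) (k-1)) (w (m+2)) := by
  obtain ⟨hdom, hbet, hlca, hlcb⟩ := h1
  intro k
  show (w (m+2) k + w (m+1) (k-1)) * w (m+2) (k+1)
      ≤ (w (m+2) (k+1) + w (m+1) (k+1-1)) * w (m+2) k
  have t := hbet (k-1)
  simp only [show m+1+1 = m+2 from rfl] at t
  ring_nf at t ⊢
  nlinarith [t]

lemma bet_a_g (h1 : Inv2 (m+1)) : BetP (w (m+2)) (fun k => w (m+2) k + w (m+1) (k-1)) := by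
  obtain ⟨hdom, hbet, hlca, hlcb⟩ := h1
  intro k
  show (w (m+2) k + w (m+1) (k-1)) * w (m+2) (k+2)
      ≤ (w (m+2) (k+1) + w (m+1) (k+1-1)) * w (m+2) (k+1)
  have t1 := hlca k
  have t2 := bet2 (suppP_w (m+2)) (suppP_w (m+1)) hbet hlca (k-1)
  simp only [show m+1+1 = m+2 from rfl] at t1 t2
  ring_nf at t1 t2 ⊢
  nlinarith [t1, t2]

lemma w3_expand (m : ℕ) (k : ℤ) :
    w (m+3) k = (w (m+2) k + w (m+1) (k-1)) + (w (m+2) (k-1) + w (m+1) ((k-1)-1)) :=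
  w_succ_eq_g (m+1) k

lemma dom_next (h1 : Inv2 (m+1)) : DomP (w (m+3)) (w (m+2)) := by
  intro k
  rw [w3_expand m k, w3_expand m (k+1)]
  have t1 := dom_g_a h1 k
  have t2 := bet_a_g h1 (k-1)
  simp only at t1 t2
  ring_nf at t1 t2 ⊢
  nlinarith [t1, t2]

lemma lc_next (h1 : Inv2 (m+1)) : LCP (w (m+3)) := by
  have hlcg := lc_g h1
  have hg := suppP_g (m+1)
  have hlc2g := lc2 hg hlcg
  intro k
  rw [w3_expand m k, w3_expand m (k+1), w3_expand m (k+2)]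
  have t1 := hlcg k
  have t2 := hlc2g (k-1)
  have t3 := hlcg (k-1)
  simp only at t1 t2 t3
  ring_nf at t1 t2 t3 ⊢
  nlinarith [t1, t2, t3]

lemma bet_next (h0 : Inv2 m) (h1 : Inv2 (m+1)) : BetP (w (m+3)) (w (m+2)) := by
  obtain ⟨hdom0, hbet0, hlcb, hlcc⟩ := h0
  obtain ⟨hdom, hbet, hlca, hlcb'⟩ := h1
  -- G k = w (m+1) k + w m (k-1)
  have hDomGb : DomP (fun k => w (m+1) k + w m (k-1)) (w (m+1)) := by
    intro k
    show (w (m+1) k + w m (k-1)) * w (m+1) (k+1)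
        ≤ (w (m+1) (k+1) + w m (k+1-1)) * w (m+1) k
    have t := hbet0 (k-1)
    ring_nf at t ⊢
    nlinarith [t]
  have hdom2Gb := dom2 (suppP_g m) (suppP_w (m+1)) (by omega) hDomGb
  intro k
  rw [w3_expand m (k+2), w3_expand m (k+1)]
  -- key : a k * (b k + b (k+1)) ≤ a (k+1) * (b k + b (k-1))
  have key : w (m+2) k * (w (m+1) k + w (m+1) (k+1))
      ≤ w (m+2) (k+1) * (w (m+1) k + w (m+1) (k-1)) := by
    have e0 := w_succ_eq_g m k
    have e1 := w_succ_eq_g m (k+1)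
    rw [e0, e1]
    have u2 := hDomGb k
    have u3 := hDomGb (k-1)
    have u4 := hdom2Gb (k-1)
    simp only at u2 u3 u4
    ring_nf at u2 u3 u4 ⊢
    nlinarith [u2, u3, u4]
  have t1 := hlca k
  simp only [show m+1+1 = m+2 from rfl] at t1
  ring_nf at t1 key ⊢
  nlinarith [t1, key]

lemma inv2_step (h0 : Inv2 m) (h1 : Inv2 (m+1)) : Inv2 (m+2) :=
  ⟨dom_next h1, bet_next h0 h1, lc_next h1, h1.2.2.1⟩

end Step

lemma inv2_all : ∀ m, Inv2 m := by
  intro m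
  induction m using Nat.strong_induction_on with
  | _ m ih =>
    match m with
    | 0 => exact inv2_zero
    | 1 => exact inv2_one
    | (m+2) => exact inv2_step (ih m (by omega)) (ih (m+1) (by omega))

lemma lcp_w (n : ℕ) : LCP (w n) := (inv2_all n).2.2.2

/-- descent persists -/
lemma descent_step (n : ℕ) (j : ℤ) (h0 : 0 ≤ j) (h : w n (j+1) ≤ w n j) :
    w n (j+2) ≤ w n (j+1) := by
  by_cases hz : w n j = 0
  · have hj : (n : ℤ) < j := by
      by_contra hle
      exact absurd hz (ne_of_gt (w_pos n j h0 (by omega)))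
    rw [w_gt n (j+1) (by omega), w_gt n (j+2) (by omega)]
  · have hp : 0 < w n j := lt_of_le_of_ne (w_nonneg n j) (Ne.symm hz)
    have hlc := lcp_w n j
    have h2 : w n (j+1) * w n (j+1) ≤ w n j * w n (j+1) :=
      mul_le_mul_of_nonneg_right h (w_nonneg n (j+1))
    have : w n j * w n (j+2) ≤ w n j * w n (j+1) := le_trans hlc h2
    exact le_of_mul_le_mul_left this hp

/-- unimodality of the sequence w n on ℕ -/
lemma unimodal_w (n : ℕ) : ∃ K : ℕ,
    (∀ i j : ℕ, i ≤ j → j ≤ K → w n (i : ℤ) ≤ w n (j : ℤ)) ∧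
    (∀ i j : ℕ, K ≤ i → i ≤ j → w n (j : ℤ) ≤ w n (i : ℤ)) := by
  classical
  have hne : ∃ j : ℕ, w n ((j:ℤ)+1) < w n (j:ℤ) := by
    refine ⟨n, ?_⟩
    rw [w_gt n ((n:ℤ)+1) (by omega)]
    exact w_pos n n (by positivity) le_rfl
  set S : Set ℕ := {j : ℕ | w n ((j:ℤ)+1) < w n (j:ℤ)} with hS
  have hSne : S.Nonempty := hne
  refine ⟨sInf S, ?_, ?_⟩
  · -- increasing up to sInf S
    have hstep : ∀ i : ℕ, i < sInf S → w n (i:ℤ) ≤ w n ((i:ℤ)+1) := by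
      intro i hi
      have : i ∉ S := Nat.notMem_of_lt_sInf hi
      simp only [hS, Set.mem_setOf_eq, not_lt] at this
      exact this
    intro i j hij hjK
    induction j with
    | zero =>
      have hi : i = 0 := by omega
      rw [hi]
    | succ j ihj =>
      rcases Nat.lt_or_ge i (j+1) with h | h
      · have hij' : i ≤ j := by omega
        have := ihj hij' (by omega)
        have h2 := hstep j (by omega)
        push_cast
        push_cast at this h2
        linarith
      · have : i = j + 1 := by omega
        subst this; rfl
  · -- decreasing from sInf S on
    have hdesc : ∀ j : ℕ, sInf S ≤ j → w n ((j:ℤ)+1) ≤ w n (j:ℤ) := by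
      intro j hj
      induction j with
      | zero =>
        have h0 : sInf S = 0 := by omega
        have : (0:ℕ) ∈ S := h0 ▸ Nat.sInf_mem hSne
        simp only [hS, Set.mem_setOf_eq] at this
        push_cast
        push_cast at this
        linarith
      | succ j ihj =>
        rcases Nat.lt_or_ge j (sInf S) with h | h
        · have : sInf S = j + 1 := by omega
          have hmem : (j+1 : ℕ) ∈ S := this ▸ Nat.sInf_mem hSne
          simp only [hS, Set.mem_setOf_eq] at hmem
          push_cast at hmem ⊢
          linarith
        · have hprev := ihj h
          have hstep := descent_step n j (by positivity) hprev
          push_cast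
          ring_nf at hstep ⊢
          linarith [hstep]
    intro i j hKi hij
    induction j with
    | zero =>
      have : i = 0 := by omega
      subst this; rfl
    | succ j ihj =>
      rcases Nat.lt_or_ge j i with h | h
      · have : i = j + 1 := by omega
        subst this; rfl
      · have h1 := ihj h
        have h2 := hdesc j (by omega)
        push_cast at h1 h2 ⊢
        linarith

/-! ### the polynomials -/

noncomputable def fpoly : ℕ → Polynomial ℤ
  | 0 => 1
  | 1 => 1 + 2 * X
  | (n+2) => (1 + X) * (fpoly (n+1) + X * fpoly n)

lemma fpoly_zero : fpoly 0 = 1 := rfl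
lemma fpoly_one : fpoly 1 = 1 + 2 * X := rfl
lemma fpoly_rec (n : ℕ) : fpoly (n+2) = (1 + X) * (fpoly (n+1) + X * fpoly n) := by
  rw [fpoly]

lemma coeff_X_mul' (q : Polynomial ℤ) (k : ℕ) :
    (X * q).coeff k = if k = 0 then 0 else q.coeff (k-1) := by
  cases k with
  | zero => simp
  | succ k => simp [Polynomial.coeff_X_mul]

lemma coeff_fpoly : ∀ (n : ℕ) (k : ℕ), (fpoly n).coeff k = w n (k : ℤ) := by
  intro n
  induction n using Nat.strong_induction_on with
  | _ n ih =>
    match n with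
    | 0 =>
      intro k
      rw [fpoly_zero, w_zero, Polynomial.coeff_one]
      by_cases h : k = 0 <;> simp [h]
    | 1 =>
      intro k
      rw [fpoly_one, w_one]
      match k with
      | 0 => simp
      | 1 => simp [Polynomial.coeff_one]
      | (k+2) => push_cast; simp [Polynomial.coeff_one, Polynomial.coeff_X]; omega
    | (n+2) =>
      intro k
      have ih1 := ih (n+1) (by omega)
      have ih0 := ih n (by omega)
      have expand : fpoly (n+2) = fpoly (n+1) + X * fpoly (n+1) + X * fpoly n + X * (X * fpoly n) := by
        rw [fpoly_rec]; ring
      rw [expand]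
      simp only [Polynomial.coeff_add, coeff_X_mul']
      rw [w_rec]
      match k with
      | 0 =>
        simp only [if_pos rfl, ih1]
        norm_num
        rw [w_neg (n+1) (-1) (by norm_num), w_neg n (-1) (by norm_num), w_neg n (-2) (by norm_num)]
        ring
      | 1 =>
        norm_num [ih1, ih0]
        rw [w_neg n (-1) (by norm_num)]
      | (k+2) =>
        have e1 : k+2-1 = k+1 := rfl
        have e2 : k+1-1 = k := rfl
        simp only [e1, e2, if_neg (show ¬ k+2 = 0 by omega), if_neg (show ¬ k+1 = 0 by omega),
          ih1, ih0]
        push_cast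
        ring_nf

end Stmt13Aux


namespace Stmt13Graph

open Finset

variable {m n : ℕ}

def QP (n : ℕ) (s : Finset (Fin n ⊕ Fin n)) : Prop :=
  ∀ u ∈ s, ∀ v ∈ s, ¬ (centipede n).Adj u v

def RP (n : ℕ) (s : Finset (Fin n ⊕ Fin n)) : Prop :=
  ∀ j : Fin n, (j : ℕ) + 1 = n → Sum.inr j ∉ s

noncomputable def ipoly (n : ℕ) : Polynomial ℤ :=
  ∑ s ∈ Finset.univ.powerset.filter (fun s => QP n s), Polynomial.X ^ s.card

noncomputable def jpoly (n : ℕ) : Polynomial ℤ :=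
  ∑ s ∈ Finset.univ.powerset.filter (fun s => QP n s ∧ RP n s), Polynomial.X ^ s.card

lemma indepPoly_centipede_eq (n : ℕ) : indepPoly (centipede n) = ipoly n := by
  unfold indepPoly ipoly QP
  exact Finset.sum_congr (@Finset.filter_congr_decidable _ _ _ _
    (fun s => Classical.propDecidable _)) (fun _ _ => rfl)

def emb (m : ℕ) : (Fin m ⊕ Fin m) ↪ (Fin (m+1) ⊕ Fin (m+1)) :=
  ⟨Sum.map Fin.castSucc Fin.castSucc,
   Function.Injective.sumMap (Fin.castSucc_injective m) (Fin.castSucc_injective m)⟩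

def aStar (m : ℕ) : Fin (m+1) ⊕ Fin (m+1) := Sum.inl (Fin.last m)
def bStar (m : ℕ) : Fin (m+1) ⊕ Fin (m+1) := Sum.inr (Fin.last m)

lemma emb_ne_aStar (x : Fin m ⊕ Fin m) : emb m x ≠ aStar m := by
  rcases x with a | a <;> simp [emb, aStar, Fin.ext_iff] <;> exact a.isLt.ne

lemma emb_ne_bStar (x : Fin m ⊕ Fin m) : emb m x ≠ bStar m := by
  rcases x with a | a <;> simp [emb, bStar, Fin.ext_iff] <;> exact a.isLt.ne

lemma aStar_ne_bStar : aStar m ≠ bStar m := by simp [aStar, bStar]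

lemma exists_emb {z : Fin (m+1) ⊕ Fin (m+1)} (h1 : z ≠ aStar m) (h2 : z ≠ bStar m) :
    ∃ x, emb m x = z := by
  rcases z with a | a
  · have ha : a ≠ Fin.last m := by
      intro h; exact h1 (by simp [aStar, h])
    exact ⟨Sum.inl (a.castPred ha), by simp [emb]⟩
  · have ha : a ≠ Fin.last m := by
      intro h; exact h2 (by simp [bStar, h])
    exact ⟨Sum.inr (a.castPred ha), by simp [emb]⟩

lemma adj_emb {x y : Fin m ⊕ Fin m} :
    (centipede (m+1)).Adj (emb m x) (emb m y) ↔ (centipede m).Adj x y := by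
  rcases x with a | a <;> rcases y with b | b <;>
      simp [centipede, SimpleGraph.fromRel_adj, emb, Fin.ext_iff]
  · constructor
    · rintro ⟨i, h1, h2⟩
      exact ⟨a, rfl, by omega⟩
    · rintro ⟨i, h1, h2⟩
      exact ⟨a.castSucc, by simp, by simp; omega⟩
  · constructor
    · rintro ⟨i, h1, h2⟩
      exact ⟨b, rfl, by omega⟩
    · rintro ⟨i, h1, h2⟩
      exact ⟨b.castSucc, by simp, by simp; omega⟩
  · intro hne
    constructor
    · rintro (⟨i, h1, x, h2, h3⟩ | ⟨i, h1, x, h2, h3⟩)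
      · exact Or.inl ⟨a, rfl, b, rfl, by omega⟩
      · exact Or.inr ⟨b, rfl, a, rfl, by omega⟩
    · rintro (⟨i, h1, x, h2, h3⟩ | ⟨i, h1, x, h2, h3⟩)
      · exact Or.inl ⟨a.castSucc, by simp, b.castSucc, by simp, by simp; omega⟩
      · exact Or.inr ⟨b.castSucc, by simp, a.castSucc, by simp, by simp; omega⟩

lemma adj_aStar {z : Fin (m+1) ⊕ Fin (m+1)} :
    (centipede (m+1)).Adj z (aStar m) ↔ z = bStar m := by
  rcases z with a | a <;>
      simp [centipede, SimpleGraph.fromRel_adj, aStar, bStar, Fin.ext_iff]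
  constructor
  · rintro ⟨i, h1, h2⟩; omega
  · intro h
    exact ⟨Fin.last m, by simp, by simp [h]⟩

lemma adj_emb_bStar {x : Fin m ⊕ Fin m} :
    (centipede (m+1)).Adj (emb m x) (bStar m) ↔
      ∃ j : Fin m, x = Sum.inr j ∧ (j : ℕ) + 1 = m := by
  rcases x with a | a <;>
      simp [centipede, SimpleGraph.fromRel_adj, emb, bStar, Fin.ext_iff]
  · intro x h1 h2
    have := a.isLt; omega
  · have hlt := a.isLt
    constructor
    · rintro ⟨hne, h⟩
      rcases h with ⟨i, h1, p, h2, h3⟩ | ⟨i, h1, p, h2, h3⟩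
      · exact ⟨a, rfl, by omega⟩
      · have hp := p.isLt
        exfalso
        omega
    · intro h
      exact ⟨by omega, Or.inl ⟨a.castSucc, by simp, Fin.last m, by simp, by simp; omega⟩⟩

lemma QP_subset {s t : Finset (Fin n ⊕ Fin n)} (hsub : t ⊆ s) (h : QP n s) : QP n t :=
  fun u hu v hv => h u (hsub hu) v (hsub hv)

lemma QP_map {t : Finset (Fin m ⊕ Fin m)} (h : QP m t) : QP (m+1) (t.map (emb m)) := by
  intro u hu v hv hadj
  rw [Finset.mem_map] at hu hv
  obtain ⟨x, hx, rfl⟩ := hu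
  obtain ⟨y, hy, rfl⟩ := hv
  exact h x hx y hy (adj_emb.mp hadj)

lemma repr_no_star {s : Finset (Fin (m+1) ⊕ Fin (m+1))} (hQ : QP (m+1) s)
    (ha : aStar m ∉ s) (hb : bStar m ∉ s) :
    ∃ t : Finset (Fin m ⊕ Fin m), QP m t ∧ t.map (emb m) = s := by
  refine ⟨s.preimage (emb m) ((emb m).injective.injOn), ?_, ?_⟩
  · intro u hu v hv hadj
    rw [Finset.mem_preimage] at hu hv
    exact hQ _ hu _ hv (adj_emb.mpr hadj)
  · ext z
    simp only [Finset.mem_map, Finset.mem_preimage]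
    constructor
    · rintro ⟨x, hx, rfl⟩; exact hx
    · intro hz
      obtain ⟨x, rfl⟩ := exists_emb (fun h => ha (h ▸ hz)) (fun h => hb (h ▸ hz))
      exact ⟨x, hz, rfl⟩

lemma mem_filterP {α : Type*} [Fintype α] {p : Finset α → Prop} [DecidablePred p]
    {s : Finset α} : s ∈ Finset.univ.powerset.filter p ↔ p s := by
  simp

/-- class with neither star -/
lemma class_none_eq (m : ℕ) :
    Finset.univ.powerset.filter
        (fun s : Finset (Fin (m+1) ⊕ Fin (m+1)) => QP (m+1) s ∧ bStar m ∉ s ∧ aStar m ∉ s)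
      = (Finset.univ.powerset.filter (fun t => QP m t)).image (fun t => t.map (emb m)) := by
  ext s
  rw [mem_filterP, Finset.mem_image]
  constructor
  · rintro ⟨hQ, hb, ha⟩
    obtain ⟨t, hQt, hmap⟩ := repr_no_star hQ ha hb
    exact ⟨t, mem_filterP.mpr hQt, hmap⟩
  · rintro ⟨t, ht, rfl⟩
    have hQt := mem_filterP.mp ht
    refine ⟨QP_map hQt, ?_, ?_⟩ <;>
      · intro hmem
        rw [Finset.mem_map] at hmem
        obtain ⟨x, hx, hex⟩ := hmem
        first
          | exact emb_ne_bStar x hex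
          | exact emb_ne_aStar x hex

/-- class with `aStar` only -/
lemma class_a_eq (m : ℕ) :
    Finset.univ.powerset.filter
        (fun s : Finset (Fin (m+1) ⊕ Fin (m+1)) => QP (m+1) s ∧ bStar m ∉ s ∧ aStar m ∈ s)
      = (Finset.univ.powerset.filter (fun t => QP m t)).image
          (fun t => insert (aStar m) (t.map (emb m))) := by
  ext s
  rw [mem_filterP, Finset.mem_image]
  constructor
  · rintro ⟨hQ, hb, ha⟩
    have ha' : aStar m ∉ s.erase (aStar m) := Finset.notMem_erase _ _
    have hb' : bStar m ∉ s.erase (aStar m) := fun h => hb (Finset.erase_subset _ _ h)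
    obtain ⟨t, hQt, hmap⟩ := repr_no_star (QP_subset (Finset.erase_subset _ _) hQ) ha' hb'
    refine ⟨t, mem_filterP.mpr hQt, ?_⟩
    rw [hmap, Finset.insert_erase ha]
  · rintro ⟨t, ht, rfl⟩
    have hQt := mem_filterP.mp ht
    refine ⟨?_, ?_, Finset.mem_insert_self _ _⟩
    · -- QP of insert
      intro u hu v hv hadj
      rw [Finset.mem_insert] at hu hv
      rcases hu with rfl | hu
      · rcases hv with rfl | hv
        · exact (centipede (m+1)).irrefl hadj
        · rw [Finset.mem_map] at hv
          obtain ⟨y, hy, rfl⟩ := hv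
          exact emb_ne_bStar y (adj_aStar.mp hadj.symm)
      · rcases hv with rfl | hv
        · rw [Finset.mem_map] at hu
          obtain ⟨x, hx, rfl⟩ := hu
          exact emb_ne_bStar x (adj_aStar.mp hadj)
        · exact QP_map hQt u hu v hv hadj
    · -- bStar not in
      intro hmem
      rw [Finset.mem_insert] at hmem
      rcases hmem with h | h
      · exact aStar_ne_bStar h.symm
      · rw [Finset.mem_map] at h
        obtain ⟨x, hx, hex⟩ := h
        exact emb_ne_bStar x hex

/-- class with `bStar` -/
lemma class_b_eq (m : ℕ) :
    Finset.univ.powerset.filter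
        (fun s : Finset (Fin (m+1) ⊕ Fin (m+1)) => QP (m+1) s ∧ bStar m ∈ s)
      = (Finset.univ.powerset.filter (fun t => QP m t ∧ RP m t)).image
          (fun t => insert (bStar m) (t.map (emb m))) := by
  ext s
  rw [mem_filterP, Finset.mem_image]
  constructor
  · rintro ⟨hQ, hb⟩
    have ha : aStar m ∉ s := by
      intro ha
      have hadj : (centipede (m+1)).Adj (bStar m) (aStar m) := adj_aStar.mpr rfl
      exact hQ _ hb _ ha hadj
    have hb' : bStar m ∉ s.erase (bStar m) := Finset.notMem_erase _ _
    have ha' : aStar m ∉ s.erase (bStar m) := fun h => ha (Finset.erase_subset _ _ h)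
    obtain ⟨t, hQt, hmap⟩ := repr_no_star (QP_subset (Finset.erase_subset _ _) hQ) ha' hb'
    refine ⟨t, mem_filterP.mpr ⟨hQt, ?_⟩, ?_⟩
    · -- RP m t
      intro j hj hmem
      have hin : emb m (Sum.inr j) ∈ s := by
        have : emb m (Sum.inr j) ∈ t.map (emb m) := Finset.mem_map_of_mem _ hmem
        rw [hmap] at this
        exact Finset.erase_subset _ _ this
      exact hQ _ hin _ hb (adj_emb_bStar.mpr ⟨j, rfl, hj⟩)
    · rw [hmap, Finset.insert_erase hb]
  · rintro ⟨t, ht, rfl⟩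
    obtain ⟨hQt, hRt⟩ := mem_filterP.mp ht
    refine ⟨?_, Finset.mem_insert_self _ _⟩
    intro u hu v hv hadj
    rw [Finset.mem_insert] at hu hv
    rcases hu with rfl | hu
    · rcases hv with rfl | hv
      · exact (centipede (m+1)).irrefl hadj
      · rw [Finset.mem_map] at hv
        obtain ⟨y, hy, rfl⟩ := hv
        obtain ⟨j, rfl, hj⟩ := adj_emb_bStar.mp hadj.symm
        exact hRt j hj hy
    · rcases hv with rfl | hv
      · rw [Finset.mem_map] at hu
        obtain ⟨x, hx, rfl⟩ := hu
        obtain ⟨j, rfl, hj⟩ := adj_emb_bStar.mp hadj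
        exact hRt j hj hx
      · exact QP_map hQt u hu v hv hadj

lemma sum_class_none (m : ℕ) :
    ∑ s ∈ Finset.univ.powerset.filter
        (fun s : Finset (Fin (m+1) ⊕ Fin (m+1)) => QP (m+1) s ∧ bStar m ∉ s ∧ aStar m ∉ s),
      (Polynomial.X : Polynomial ℤ) ^ s.card = ipoly m := by
  rw [class_none_eq, Finset.sum_image (fun x _ y _ h => Finset.map_injective (emb m) h), ipoly]
  exact Finset.sum_congr rfl (fun t _ => by rw [Finset.card_map])

lemma sum_class_a (m : ℕ) :
    ∑ s ∈ Finset.univ.powerset.filter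
        (fun s : Finset (Fin (m+1) ⊕ Fin (m+1)) => QP (m+1) s ∧ bStar m ∉ s ∧ aStar m ∈ s),
      (Polynomial.X : Polynomial ℤ) ^ s.card = Polynomial.X * ipoly m := by
  rw [class_a_eq, Finset.sum_image, ipoly, Finset.mul_sum]
  · apply Finset.sum_congr rfl
    intro t _
    have hnm : aStar m ∉ t.map (emb m) := by
      intro h
      rw [Finset.mem_map] at h
      obtain ⟨x, hx, hex⟩ := h
      exact emb_ne_aStar x hex
    rw [Finset.card_insert_of_notMem hnm, Finset.card_map, pow_succ, mul_comm]
  · intro x _ y _ h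
    have hx : aStar m ∉ x.map (emb m) := by
      intro hh; rw [Finset.mem_map] at hh; obtain ⟨z, hz, hez⟩ := hh; exact emb_ne_aStar z hez
    have hy : aStar m ∉ y.map (emb m) := by
      intro hh; rw [Finset.mem_map] at hh; obtain ⟨z, hz, hez⟩ := hh; exact emb_ne_aStar z hez
    have := congrArg (fun u => Finset.erase u (aStar m)) h
    simp only [Finset.erase_insert hx, Finset.erase_insert hy] at this
    exact Finset.map_injective (emb m) this

lemma sum_class_b (m : ℕ) :
    ∑ s ∈ Finset.univ.powerset.filter
        (fun s : Finset (Fin (m+1) ⊕ Fin (m+1)) => QP (m+1) s ∧ bStar m ∈ s),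
      (Polynomial.X : Polynomial ℤ) ^ s.card = Polynomial.X * jpoly m := by
  rw [class_b_eq, Finset.sum_image, jpoly, Finset.mul_sum]
  · apply Finset.sum_congr rfl
    intro t _
    have hnm : bStar m ∉ t.map (emb m) := by
      intro h
      rw [Finset.mem_map] at h
      obtain ⟨x, hx, hex⟩ := h
      exact emb_ne_bStar x hex
    rw [Finset.card_insert_of_notMem hnm, Finset.card_map, pow_succ, mul_comm]
  · intro x _ y _ h
    have hx : bStar m ∉ x.map (emb m) := by
      intro hh; rw [Finset.mem_map] at hh; obtain ⟨z, hz, hez⟩ := hh; exact emb_ne_bStar z hez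
    have hy : bStar m ∉ y.map (emb m) := by
      intro hh; rw [Finset.mem_map] at hh; obtain ⟨z, hz, hez⟩ := hh; exact emb_ne_bStar z hez
    have := congrArg (fun u => Finset.erase u (bStar m)) h
    simp only [Finset.erase_insert hx, Finset.erase_insert hy] at this
    exact Finset.map_injective (emb m) this

lemma ipoly_succ (m : ℕ) :
    ipoly (m+1) = (1 + Polynomial.X) * ipoly m + Polynomial.X * jpoly m := by
  have h1 := Finset.sum_filter_add_sum_filter_not
    (Finset.univ.powerset.filter (fun s : Finset (Fin (m+1) ⊕ Fin (m+1)) => QP (m+1) s))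
    (fun s => bStar m ∈ s) (fun s => (Polynomial.X : Polynomial ℤ) ^ s.card)
  have h2 := Finset.sum_filter_add_sum_filter_not
    ((Finset.univ.powerset.filter (fun s : Finset (Fin (m+1) ⊕ Fin (m+1)) => QP (m+1) s)).filter
      (fun s => bStar m ∉ s))
    (fun s => aStar m ∈ s) (fun s => (Polynomial.X : Polynomial ℤ) ^ s.card)
  simp only [Finset.filter_filter, and_assoc] at h1 h2
  rw [ipoly, ← h1, ← h2, sum_class_b, sum_class_a, sum_class_none]
  ring

lemma RP_succ {s : Finset (Fin (m+1) ⊕ Fin (m+1))} : RP (m+1) s ↔ bStar m ∉ s := by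
  constructor
  · intro h
    exact h (Fin.last m) (by simp)
  · intro h j hj
    have : j = Fin.last m := by
      apply Fin.ext
      simp only [Fin.val_last]
      omega
    rw [this]
    exact h

lemma jpoly_succ (m : ℕ) : jpoly (m+1) = (1 + Polynomial.X) * ipoly m := by
  have hre : Finset.univ.powerset.filter
      (fun s : Finset (Fin (m+1) ⊕ Fin (m+1)) => QP (m+1) s ∧ RP (m+1) s)
      = Finset.univ.powerset.filter (fun s => QP (m+1) s ∧ bStar m ∉ s) := by
    apply Finset.filter_congr
    intro s _
    rw [RP_succ]
  have h2 := Finset.sum_filter_add_sum_filter_not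
    (Finset.univ.powerset.filter
      (fun s : Finset (Fin (m+1) ⊕ Fin (m+1)) => QP (m+1) s ∧ bStar m ∉ s))
    (fun s => aStar m ∈ s) (fun s => (Polynomial.X : Polynomial ℤ) ^ s.card)
  simp only [Finset.filter_filter, and_assoc] at h2
  rw [jpoly, hre, ← h2, sum_class_a, sum_class_none]
  ring

lemma ipoly_zero : ipoly 0 = 1 := by
  rw [ipoly]
  rw [Finset.univ_eq_empty, Finset.powerset_empty]
  rw [Finset.filter_singleton, if_pos]
  · simp
  · intro u hu
    exact absurd hu (Finset.notMem_empty u)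

lemma jpoly_zero : jpoly 0 = 1 := by
  rw [jpoly]
  rw [Finset.univ_eq_empty, Finset.powerset_empty]
  rw [Finset.filter_singleton, if_pos]
  · simp
  · constructor
    · intro u hu
      exact absurd hu (Finset.notMem_empty u)
    · intro j
      exact absurd j.isLt (by omega)

end Stmt13Graph

namespace Stmt13Glue

open Stmt13Aux Stmt13Graph

lemma ipoly_eq_fpoly : ∀ n : ℕ, Stmt13Graph.ipoly n = Stmt13Aux.fpoly n := by
  intro n
  induction n using Nat.strong_induction_on with
  | _ n ih =>
    match n with
    | 0 => rw [ipoly_zero, fpoly_zero]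
    | 1 =>
      have h := ipoly_succ 0
      norm_num at h
      rw [h, ipoly_zero, jpoly_zero, fpoly_one]
      ring
    | (n+2) =>
      rw [ipoly_succ (n+1), jpoly_succ n, fpoly_rec, ih (n+1) (by omega), ih n (by omega)]
      ring

end Stmt13Glue

/-- `I(W_n;x)` is unimodal for all `n ≥ 1`, `I(W_0;x) = 1`,
`I(W_1;x) = 1 + 2x`, and for `n ≥ 2`,
`I(W_n;x) = (1+x)·(I(W_{n−1};x) + x·I(W_{n−2};x))`. -/
theorem stmt13 :
    (∀ n : ℕ, 1 ≤ n → Unimodal (indepPoly (centipede n))) ∧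
    indepPoly (centipede 0) = 1 ∧
    indepPoly (centipede 1) = 1 + 2 * Polynomial.X ∧
    (∀ n : ℕ, 2 ≤ n → indepPoly (centipede n) =
      (1 + Polynomial.X) *
        (indepPoly (centipede (n - 1)) + Polynomial.X * indepPoly (centipede (n - 2)))) := by
  refine ⟨?_, ?_, ?_, ?_⟩
  · intro n _
    rw [Stmt13Graph.indepPoly_centipede_eq, Stmt13Glue.ipoly_eq_fpoly]
    obtain ⟨K, hup, hdown⟩ := Stmt13Aux.unimodal_w n
    refine ⟨K, fun i j h1 h2 => ?_, fun i j h1 h2 => ?_⟩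
    · rw [Stmt13Aux.coeff_fpoly, Stmt13Aux.coeff_fpoly]
      exact hup i j h1 h2
    · rw [Stmt13Aux.coeff_fpoly, Stmt13Aux.coeff_fpoly]
      exact hdown i j h1 h2
  · rw [Stmt13Graph.indepPoly_centipede_eq, Stmt13Graph.ipoly_zero]
  · rw [Stmt13Graph.indepPoly_centipede_eq, Stmt13Glue.ipoly_eq_fpoly, Stmt13Aux.fpoly_one]
  · intro n hn
    obtain ⟨m, rfl⟩ : ∃ m, n = m + 2 := ⟨n - 2, by omega⟩
    rw [show m+2-1 = m+1 from rfl, show m+2-2 = m from rfl]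
    rw [Stmt13Graph.indepPoly_centipede_eq, Stmt13Graph.indepPoly_centipede_eq,
      Stmt13Graph.indepPoly_centipede_eq, Stmt13Glue.ipoly_eq_fpoly, Stmt13Glue.ipoly_eq_fpoly,
      Stmt13Glue.ipoly_eq_fpoly, Stmt13Aux.fpoly_rec]
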